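/- Let * be a continuous t-norm on [0,1]. Let X be a set and let φ_{λ,x} : X → [0,∞] be a family of functions indexed by λ ∈ (0,1] and x ∈ X satisfying: (A1) φ_{λ,x}(x) = 0 for all λ,x; (LS) φ_{λ,x}(y) = φ_{λ,y}(x) for all λ,x,y; (LD) φ_{λ,x}(y) = inf{φ_{ρ,x}(y) : 0 < ρ < λ} for all λ,x,y; (LT) for all ε,λ,λ' ∈ (0,1] with (1−λ')*(1−λ) > 1−ε and all x,y,z, φ_{ε,x}(z) ≤ φ_{λ,x}(y) + φ_{λ',y}(z); and (LH) if x ≠ y then there exists λ ∈ (0,1] with φ_{λ,x}(y) > 0. Define β : X × X × [0,∞] → [0,1] by β(x,y,∞)=1 and, for γ < ∞, β(x,y,γ) = sup{1−λ : λ ∈ (0,1], φ_{λ,x}(y) < γ} (with sup ∅ = 0). Then (X,β,*) is a probabilistic metric space, i.e. β satisfies (P1)–(P5). -/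

import Mathlib

open scoped ENNReal

noncomputable section

/-- A continuous t-norm `*` on the unit interval `[0,1] ⊆ ℝ`:
`([0,1], *, 1)` is a commutative monoid, `*` is continuous on `[0,1] × [0,1]`
and monotone in both arguments. -/
structure ContinuousTNorm where
  mul : ℝ → ℝ → ℝ
  mem_mul : ∀ a b, a ∈ Set.Icc (0:ℝ) 1 → b ∈ Set.Icc (0:ℝ) 1 →
    mul a b ∈ Set.Icc (0:ℝ) 1
  mul_comm : ∀ a b, a ∈ Set.Icc (0:ℝ) 1 → b ∈ Set.Icc (0:ℝ) 1 → mul a b = mul b a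
  mul_assoc : ∀ a b c, a ∈ Set.Icc (0:ℝ) 1 → b ∈ Set.Icc (0:ℝ) 1 →
    c ∈ Set.Icc (0:ℝ) 1 → mul (mul a b) c = mul a (mul b c)
  mul_one : ∀ a, a ∈ Set.Icc (0:ℝ) 1 → mul a 1 = a
  continuousOn : ContinuousOn (fun p : ℝ × ℝ => mul p.1 p.2)
    (Set.Icc (0:ℝ) 1 ×ˢ Set.Icc (0:ℝ) 1)
  mul_mono : ∀ a a' b b', a ∈ Set.Icc (0:ℝ) 1 → a' ∈ Set.Icc (0:ℝ) 1 →
    b ∈ Set.Icc (0:ℝ) 1 → b' ∈ Set.Icc (0:ℝ) 1 → a ≤ a' → b ≤ b' →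
    mul a b ≤ mul a' b'

/-- `(X, α, *)` is a probabilistic metric space: `α : X × X × [0,∞] → [0,1]`
satisfies (P1)–(P5), where left-continuity on `(0,∞)` is expressed via suprema. -/
structure IsProbMetric {X : Type*} (T : ContinuousTNorm)
    (α : X → X → ℝ≥0∞ → ℝ) : Prop where
  mem : ∀ x y γ, α x y γ ∈ Set.Icc (0:ℝ) 1
  mono : ∀ x y, Monotone (α x y)
  zero : ∀ x y, α x y 0 = 0
  top : ∀ x y, α x y ⊤ = 1
  left_cont : ∀ x y (γ : ℝ≥0∞), 0 < γ → γ ≠ ⊤ →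
    α x y γ = sSup (α x y '' Set.Iio γ)
  refl : ∀ x (γ : ℝ≥0∞), 0 < γ → α x x γ = 1
  symm : ∀ x y γ, α x y γ = α y x γ
  sep : ∀ x y, (∀ γ : ℝ≥0∞, 0 < γ → α x y γ = 1) → x = y
  triangle : ∀ x y z (r s : ℝ≥0∞), T.mul (α y z r) (α x y s) ≤ α x z (r + s)

/-- `β(x,y,γ) = sup {1 - λ | λ ∈ (0,1], φ_{λ,x}(y) < γ}` (intended for `γ < ∞`),
with `sup ∅ = 0` (the junk value of `Real.sSup`). -/
noncomputable def betaFin {X : Type*} (φ : ℝ → X → X → ℝ≥0∞) (x y : X) (γ : ℝ≥0∞) : ℝ :=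
  sSup {t : ℝ | ∃ l : ℝ, 0 < l ∧ l ≤ 1 ∧ φ l x y < γ ∧ t = 1 - l}

/-- `β : X × X × [0,∞] → [0,1]` with `β(x,y,∞) = 1` and, for `γ < ∞`,
`β(x,y,γ) = sup {1 - λ | λ ∈ (0,1], φ_{λ,x}(y) < γ}` (with `sup ∅ = 0`). -/
noncomputable def betaE {X : Type*} (φ : ℝ → X → X → ℝ≥0∞) (x y : X) (γ : ℝ≥0∞) : ℝ :=
  if γ = ⊤ then 1 else betaFin φ x y γ

namespace Stmt13Aux

variable {X : Type*} (φ : ℝ → X → X → ℝ≥0∞)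

/-- The set whose sup is `betaFin`. -/
def S (x y : X) (γ : ℝ≥0∞) : Set ℝ :=
  {t : ℝ | ∃ l : ℝ, 0 < l ∧ l ≤ 1 ∧ φ l x y < γ ∧ t = 1 - l}

lemma betaFin_eq (x y : X) (γ : ℝ≥0∞) : betaFin φ x y γ = sSup (S φ x y γ) := rfl

lemma S_subset (x y : X) (γ : ℝ≥0∞) : S φ x y γ ⊆ Set.Ico (0:ℝ) 1 := by
  rintro t ⟨l, hl0, hl1, -, rfl⟩
  exact ⟨by linarith, by linarith⟩

lemma S_bdd (x y : X) (γ : ℝ≥0∞) : BddAbove (S φ x y γ) :=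
  ⟨1, fun t ht => ((S_subset φ x y γ) ht).2.le⟩

lemma betaFin_nonneg (x y : X) (γ : ℝ≥0∞) : 0 ≤ betaFin φ x y γ :=
  Real.sSup_nonneg (fun t ht => ((S_subset φ x y γ) ht).1)

lemma betaFin_le_one (x y : X) (γ : ℝ≥0∞) : betaFin φ x y γ ≤ 1 :=
  Real.sSup_le (fun t ht => ((S_subset φ x y γ) ht).2.le) zero_le_one

lemma le_betaFin {x y : X} {γ : ℝ≥0∞} {t : ℝ} (ht : t ∈ S φ x y γ) :
    t ≤ betaFin φ x y γ :=
  le_csSup (S_bdd φ x y γ) ht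

lemma betaFin_mono (x y : X) {γ γ' : ℝ≥0∞} (h : γ ≤ γ') :
    betaFin φ x y γ ≤ betaFin φ x y γ' := by
  refine Real.sSup_le (fun t ht => ?_) (betaFin_nonneg φ x y γ')
  obtain ⟨l, hl0, hl1, hφ, rfl⟩ := ht
  exact le_betaFin φ ⟨l, hl0, hl1, lt_of_lt_of_le hφ h, rfl⟩

lemma betaE_mem (x y : X) (γ : ℝ≥0∞) : betaE φ x y γ ∈ Set.Icc (0:ℝ) 1 := by
  unfold betaE
  split
  · exact ⟨zero_le_one, le_rfl⟩
  · exact ⟨betaFin_nonneg φ x y γ, betaFin_le_one φ x y γ⟩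

end Stmt13Aux

open Stmt13Aux Filter

/-- If the family `φ` satisfies (A1), (LS), (LD), (LT) for a
continuous t-norm `*`, and (LH), then `(X, β, *)` is a probabilistic metric
space, i.e. `β` satisfies (P1)–(P5). -/
theorem stmt13 {X : Type*} (T : ContinuousTNorm) (φ : ℝ → X → X → ℝ≥0∞)
    (hA1 : ∀ l : ℝ, 0 < l → l ≤ 1 → ∀ x : X, φ l x x = 0)
    (hLS : ∀ l : ℝ, 0 < l → l ≤ 1 → ∀ x y : X, φ l x y = φ l y x)
    (hLD : ∀ l : ℝ, 0 < l → l ≤ 1 → ∀ x y : X,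
      φ l x y = sInf ((fun ρ => φ ρ x y) '' Set.Ioo (0:ℝ) l))
    (hLT : ∀ ε l l' : ℝ, 0 < ε → ε ≤ 1 → 0 < l → l ≤ 1 → 0 < l' → l' ≤ 1 →
      1 - ε < T.mul (1 - l') (1 - l) →
      ∀ x y z : X, φ ε x z ≤ φ l x y + φ l' y z)
    (hLH : ∀ x y : X, x ≠ y → ∃ l : ℝ, 0 < l ∧ l ≤ 1 ∧ 0 < φ l x y) :
    IsProbMetric T (fun x y γ => betaE φ x y γ) := by
  -- φ is antitone in the index
  have hanti : ∀ {ρ l : ℝ}, 0 < ρ → ρ < l → l ≤ 1 → ∀ x y : X, φ l x y ≤ φ ρ x y := by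
    intro ρ l hρ hρl hl1 x y
    rw [hLD l (hρ.trans hρl) hl1 x y]
    exact sInf_le ⟨ρ, ⟨hρ, hρl⟩, rfl⟩
  -- key step for the triangle inequality
  have key : ∀ (x y z : X) (r s : ℝ≥0∞) (l l' : ℝ), 0 < l → l ≤ 1 → 0 < l' → l' ≤ 1 →
      φ l x y < s → φ l' y z < r →
      T.mul (1 - l') (1 - l) ≤ betaFin φ x z (r + s) := by
    intro x y z r s l l' hl0 hl1 hl'0 hl'1 hs hr
    set m := T.mul (1 - l') (1 - l) with hm
    have hmem : m ∈ Set.Icc (0:ℝ) 1 :=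
      T.mem_mul _ _ ⟨by linarith, by linarith⟩ ⟨by linarith, by linarith⟩
    rcases le_or_gt m 0 with h0 | h0
    · exact h0.trans (betaFin_nonneg φ x z (r + s))
    refine le_of_forall_sub_le (fun δ hδ => ?_)
    set ε := min (1 - m + δ) 1 with hε
    have hε0 : 0 < ε := lt_min (by linarith [hmem.2]) one_pos
    have hε1 : ε ≤ 1 := min_le_right _ _
    have hεm : 1 - ε < m := by
      rcases min_cases (1 - m + δ) 1 with ⟨h, -⟩ | ⟨h, -⟩ <;> rw [hε, h] <;> linarith
    have hφε : φ ε x z < r + s := by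
      calc φ ε x z ≤ φ l x y + φ l' y z := hLT ε l l' hε0 hε1 hl0 hl1 hl'0 hl'1 hεm x y z
        _ < s + r := ENNReal.add_lt_add hs hr
        _ = r + s := add_comm s r
    have : (1 - ε : ℝ) ≤ betaFin φ x z (r + s) := le_betaFin φ ⟨ε, hε0, hε1, hφε, rfl⟩
    have : m - δ ≤ 1 - ε := by
      rcases min_cases (1 - m + δ) 1 with ⟨h, h2⟩ | ⟨h, h2⟩ <;> rw [hε, h] <;> linarith
    linarith [le_betaFin φ (⟨ε, hε0, hε1, hφε, rfl⟩ : (1-ε) ∈ S φ x z (r+s))]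
  constructor
  · -- mem
    intro x y γ; exact betaE_mem φ x y γ
  · -- mono
    intro x y γ γ' h
    by_cases hγ' : γ' = ⊤
    · subst hγ'
      simp only [betaE, if_pos rfl]
      exact (betaE_mem φ x y γ).2
    · have hγ : γ ≠ ⊤ := fun hc => hγ' (top_le_iff.mp (hc ▸ h))
      simp only [betaE, if_neg hγ, if_neg hγ']
      exact betaFin_mono φ x y h
  · -- zero
    intro x y
    simp only [betaE, if_neg (by simp : (0:ℝ≥0∞) ≠ ⊤)]
    rw [betaFin_eq]
    convert Real.sSup_empty
    rw [Set.eq_empty_iff_forall_notMem]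
    rintro t ⟨l, -, -, hφ, -⟩
    exact (not_lt_of_ge zero_le) hφ
  · -- top
    intro x y; simp [betaE]
  · -- left continuity
    intro x y γ hγ0 hγtop
    have hne : (betaE φ x y '' Set.Iio γ).Nonempty := ⟨_, ⟨0, hγ0, rfl⟩⟩
    have hbdd : BddAbove (betaE φ x y '' Set.Iio γ) := by
      refine ⟨1, ?_⟩
      rintro t ⟨γ', -, rfl⟩
      exact (betaE_mem φ x y γ').2
    have h0le : (0:ℝ) ≤ sSup (betaE φ x y '' Set.Iio γ) := by
      refine le_csSup_of_le hbdd ⟨0, hγ0, rfl⟩ (betaE_mem φ x y 0).1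
    simp only [betaE, if_neg hγtop]
    apply le_antisymm
    · refine Real.sSup_le (fun t ht => ?_) h0le
      obtain ⟨l, hl0, hl1, hφ, rfl⟩ := ht
      obtain ⟨γ', hγ'1, hγ'2⟩ := exists_between hφ
      have hγ'top : γ' ≠ ⊤ := (hγ'2.trans_le le_top).ne
      refine le_csSup_of_le hbdd ⟨γ', hγ'2, rfl⟩ ?_
      simp only [betaE, if_neg hγ'top]
      exact le_betaFin φ ⟨l, hl0, hl1, hγ'1, rfl⟩
    · refine Real.sSup_le ?_ (betaFin_nonneg φ x y γ)
      rintro t ⟨γ', hγ', rfl⟩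
      have hγ'top : γ' ≠ ⊤ := (hγ'.trans_le le_top).ne
      simp only [betaE, if_neg hγ'top]
      exact betaFin_mono φ x y hγ'.le
  · -- refl
    intro x γ hγ0
    by_cases hγ : γ = ⊤
    · simp [betaE, hγ]
    simp only [betaE, if_neg hγ]
    apply le_antisymm (betaFin_le_one φ x x γ)
    refine le_of_forall_sub_le (fun δ hδ => ?_)
    set l := min δ 1 with hl
    have hl0 : 0 < l := lt_min hδ one_pos
    have hl1 : l ≤ 1 := min_le_right _ _
    have : (1 - l : ℝ) ≤ betaFin φ x x γ := by
      refine le_betaFin φ ⟨l, hl0, hl1, ?_, rfl⟩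
      rw [hA1 l hl0 hl1 x]
      exact hγ0
    have : 1 - δ ≤ 1 - l := by
      have := min_le_left δ 1; linarith [hl ▸ this]
    linarith [le_betaFin φ (⟨l, hl0, hl1, by rw [hA1 l hl0 hl1 x]; exact hγ0, rfl⟩ :
      (1 - l) ∈ S φ x x γ)]
  · -- symm
    intro x y γ
    simp only [betaE]
    split
    · rfl
    · unfold betaFin
      congr 1
      ext t
      constructor <;> rintro ⟨l, h1, h2, h3, rfl⟩
      · exact ⟨l, h1, h2, (hLS l h1 h2 x y) ▸ h3, rfl⟩
      · exact ⟨l, h1, h2, (hLS l h1 h2 y x) ▸ h3, rfl⟩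
  · -- sep
    intro x y h
    by_contra hxy
    obtain ⟨l₀, hl₀0, hl₀1, hφ0⟩ := hLH x y hxy
    set γ := min (φ l₀ x y) 1 with hγ
    have hγ0 : 0 < γ := lt_min hφ0 zero_lt_one
    have hγtop : γ ≠ ⊤ := by
      intro hc
      have : (1:ℝ≥0∞) = ⊤ := top_le_iff.mp (hc ▸ min_le_right (φ l₀ x y) 1)
      simp at this
    have h1 : betaFin φ x y γ = 1 := by
      have := h γ hγ0
      simpa [betaE, if_neg hγtop] using this
    have hlt : (1 - l₀ : ℝ) < sSup (S φ x y γ) := by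
      rw [← betaFin_eq, h1]; linarith
    have hSne : (S φ x y γ).Nonempty := by
      by_contra hc
      rw [Set.not_nonempty_iff_eq_empty] at hc
      rw [betaFin_eq, hc, Real.sSup_empty] at h1
      norm_num at h1
    obtain ⟨t, ht, hlt'⟩ := exists_lt_of_lt_csSup hSne hlt
    obtain ⟨l, hl0, hl1, hφl, rfl⟩ := ht
    have hll₀ : l < l₀ := by linarith
    have : φ l₀ x y ≤ φ l x y := hanti hl0 hll₀ hl₀1 x y
    have : γ ≤ φ l x y := le_trans (min_le_left _ _) this
    exact absurd hφl (not_lt_of_ge this)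
  · -- triangle
    intro x y z r s
    by_cases hr : r = ⊤
    · have : r + s = ⊤ := by simp [hr]
      simp only [betaE, if_pos this]
      have h1 := betaE_mem φ y z r
      have h2 := betaE_mem φ x y s
      calc T.mul (betaE φ y z r) (betaE φ x y s)
          ≤ T.mul 1 1 := T.mul_mono _ _ _ _ h1 ⟨zero_le_one, le_rfl⟩ h2
            ⟨zero_le_one, le_rfl⟩ h1.2 h2.2
        _ = 1 := T.mul_one 1 ⟨zero_le_one, le_rfl⟩
    by_cases hs : s = ⊤
    · have : r + s = ⊤ := by simp [hs]
      simp only [betaE, if_pos this]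
      have h1 := betaE_mem φ y z r
      have h2 := betaE_mem φ x y s
      calc T.mul (betaE φ y z r) (betaE φ x y s)
          ≤ T.mul 1 1 := T.mul_mono _ _ _ _ h1 ⟨zero_le_one, le_rfl⟩ h2
            ⟨zero_le_one, le_rfl⟩ h1.2 h2.2
        _ = 1 := T.mul_one 1 ⟨zero_le_one, le_rfl⟩
    have hrs : r + s ≠ ⊤ := by simp [hr, hs]
    simp only [betaE, if_neg hr, if_neg hs, if_neg hrs]
    set A := S φ y z r with hA
    set B := S φ x y s with hB
    by_cases hAne : A.Nonempty
    · by_cases hBne : B.Nonempty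
      · -- approximate both sups by sequences
        obtain ⟨u, -, hu, huA⟩ := exists_seq_tendsto_sSup hAne (S_bdd φ y z r)
        obtain ⟨v, -, hv, hvB⟩ := exists_seq_tendsto_sSup hBne (S_bdd φ x y s)
        have ha : betaFin φ y z r ∈ Set.Icc (0:ℝ) 1 :=
          ⟨betaFin_nonneg φ y z r, betaFin_le_one φ y z r⟩
        have hb : betaFin φ x y s ∈ Set.Icc (0:ℝ) 1 :=
          ⟨betaFin_nonneg φ x y s, betaFin_le_one φ x y s⟩
        have htend : Tendsto (fun n => T.mul (u n) (v n)) atTop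
            (nhds (T.mul (betaFin φ y z r) (betaFin φ x y s))) := by
          have hpair : Tendsto (fun n => (u n, v n)) atTop
              (nhdsWithin (betaFin φ y z r, betaFin φ x y s)
                (Set.Icc (0:ℝ) 1 ×ˢ Set.Icc (0:ℝ) 1)) := by
            apply tendsto_nhdsWithin_of_tendsto_nhds_of_eventually_within
            · rw [betaFin_eq, betaFin_eq]
              exact hu.prodMk_nhds hv
            · refine Eventually.of_forall (fun n => ⟨?_, ?_⟩)
              · have := S_subset φ y z r (huA n); exact ⟨this.1, this.2.le⟩
              · have := S_subset φ x y s (hvB n); exact ⟨this.1, this.2.le⟩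
          exact ((T.continuousOn (betaFin φ y z r, betaFin φ x y s)
            ⟨ha, hb⟩).tendsto).comp hpair
        refine le_of_tendsto htend (Eventually.of_forall (fun n => ?_))
        obtain ⟨l', hl'0, hl'1, hφ', hu'⟩ := huA n
        obtain ⟨l, hl0, hl1, hφl, hv'⟩ := hvB n
        rw [hu', hv']
        exact key x y z r s l l' hl0 hl1 hl'0 hl'1 hφl hφ'
      · -- B empty : betaFin x y s = 0
        rw [Set.not_nonempty_iff_eq_empty] at hBne
        have hb0 : betaFin φ x y s = 0 := by rw [betaFin_eq, ← hB, hBne, Real.sSup_empty]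
        rw [hb0]
        have ha : betaFin φ y z r ∈ Set.Icc (0:ℝ) 1 :=
          ⟨betaFin_nonneg φ y z r, betaFin_le_one φ y z r⟩
        calc T.mul (betaFin φ y z r) 0
            ≤ T.mul 1 0 := T.mul_mono _ _ _ _ ha ⟨zero_le_one, le_rfl⟩
              ⟨le_rfl, zero_le_one⟩ ⟨le_rfl, zero_le_one⟩ ha.2 le_rfl
          _ = T.mul 0 1 := T.mul_comm 1 0 ⟨zero_le_one, le_rfl⟩ ⟨le_rfl, zero_le_one⟩
          _ = 0 := T.mul_one 0 ⟨le_rfl, zero_le_one⟩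
          _ ≤ _ := betaFin_nonneg φ x z (r + s)
    · -- A empty : betaFin y z r = 0
      rw [Set.not_nonempty_iff_eq_empty] at hAne
      have ha0 : betaFin φ y z r = 0 := by rw [betaFin_eq, ← hA, hAne, Real.sSup_empty]
      rw [ha0]
      have hb : betaFin φ x y s ∈ Set.Icc (0:ℝ) 1 :=
        ⟨betaFin_nonneg φ x y s, betaFin_le_one φ x y s⟩
      calc T.mul 0 (betaFin φ x y s)
          ≤ T.mul 0 1 := T.mul_mono _ _ _ _ ⟨le_rfl, zero_le_one⟩ ⟨le_rfl, zero_le_one⟩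
            hb ⟨zero_le_one, le_rfl⟩ le_rfl hb.2
        _ = 0 := T.mul_one 0 ⟨le_rfl, zero_le_one⟩
        _ ≤ _ := betaFin_nonneg φ x z (r + s)
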